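/- arXiv:2006.08085 — 4 statements merged into one kernel-verified Lean document; each statement's English description precedes it below -/
import Mathlib

section
/- The derivative of Ψ satisfies 0 ≤ Ψ'(z) ≤ √(54/e) for every z ∈ ℝ. -/
/-- Ψ(z) = 0 for z ≤ 1/2 and Ψ(z) = exp(1 − 1/(2z−1)²) for z > 1/2. -/
noncomputable def Psi (z : ℝ) : ℝ :=
  if z ≤ 1/2 then 0 else Real.exp (1 - 1/(2*z - 1)^2)

open Real Filter

lemma psi_key_ineq (t : ℝ) (ht : 0 < t) :
    Real.exp (1 - 1/t^2) * (4 / t^3) ≤ Real.sqrt (54 / Real.exp 1) := by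
  set s : ℝ := 1 / t^2 with hs
  have hspos : 0 < s := by positivity
  have hLnn : 0 ≤ Real.exp (1 - s) * (4 / t^3) := by positivity
  rw [show Real.sqrt (54 / Real.exp 1) = Real.sqrt (54 * Real.exp (-1)) by
    rw [Real.exp_neg]; ring_nf]
  rw [← Real.sqrt_sq hLnn]
  apply Real.sqrt_le_sqrt
  have h1 : 2*s/3 ≤ Real.exp (2*s/3 - 1) := by
    have := Real.add_one_le_exp (2*s/3 - 1); linarith
  have h2 : (2*s/3)^3 ≤ Real.exp (2*s - 3) := by
    calc (2*s/3)^3 ≤ (Real.exp (2*s/3 - 1))^3 := by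
          apply pow_le_pow_left₀ (by positivity) h1 3
      _ = Real.exp (2*s - 3) := by
          rw [← Real.exp_nat_mul]; ring_nf
  have h3 : (2*s/3)^3 * Real.exp (2 - 2*s) ≤ Real.exp (2*s - 3) * Real.exp (2 - 2*s) :=
    mul_le_mul_of_nonneg_right h2 (Real.exp_pos _).le
  have h4 : Real.exp (2*s - 3) * Real.exp (2 - 2*s) = Real.exp (-1) := by
    rw [← Real.exp_add]; ring_nf
  have hsq : (Real.exp (1 - s) * (4 / t^3))^2 = 16 * s^3 * Real.exp (2 - 2*s) := by
    have ht2 : t ≠ 0 := ht.ne'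
    have : (Real.exp (1-s))^2 = Real.exp (2 - 2*s) := by
      rw [← Real.exp_nat_mul]; ring_nf
    have hs3 : s^3 = 1 / t^6 := by
      rw [hs]; field_simp
    rw [mul_pow, this, hs3]; field_simp; ring
  rw [hsq]
  nlinarith [h3, h4, Real.exp_pos (2 - 2*s), Real.exp_pos (-1)]

lemma psi_hasDerivAt_right (z : ℝ) (hz : 1/2 < z) :
    HasDerivAt Psi (Real.exp (1 - 1/(2*z - 1)^2) * (4 / (2*z - 1)^3)) z := by
  have ht : (0:ℝ) < 2*z - 1 := by linarith
  have htne : (2*z - 1) ≠ 0 := ht.ne'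
  have h1 : HasDerivAt (fun z : ℝ => 2*z - 1) 2 z := by
    simpa using ((hasDerivAt_id z).const_mul 2).sub_const 1
  have h2 : HasDerivAt (fun z : ℝ => (2*z - 1)^2) (2 * (2*z-1)^1 * 2) z := h1.pow 2
  have h3 : HasDerivAt (fun z : ℝ => ((2*z - 1)^2)⁻¹)
      (-(2 * (2*z-1)^1 * 2) / ((2*z-1)^2)^2) z := h2.inv (pow_ne_zero 2 htne)
  have h4 : HasDerivAt (fun z : ℝ => 1 - ((2*z - 1)^2)⁻¹)
      (-(-(2 * (2*z-1)^1 * 2) / ((2*z-1)^2)^2)) z := h3.const_sub 1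
  have h5 := h4.exp
  have heq : (fun z : ℝ => Real.exp (1 - ((2*z - 1)^2)⁻¹)) =ᶠ[nhds z] Psi := by
    filter_upwards [Ioi_mem_nhds hz] with x hx
    have hx' : ¬ x ≤ 1/2 := not_le.mpr hx
    simp only [Psi, if_neg hx']
    rw [one_div]
  have h6 := h5.congr_of_eventuallyEq heq.symm
  refine h6.congr_deriv ?_
  rw [one_div]
  field_simp
  ring

lemma psi_deriv_half : deriv Psi (1/2) = 0 := by
  have h : HasDerivAt Psi 0 (1/2) := by
    rw [hasDerivAt_iff_tendsto_slope]
    apply squeeze_zero_norm (a := fun x : ℝ => 4 * Real.exp 1 * |x - 1/2|)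
    · intro x
      have hPsi0 : Psi (1/2) = 0 := by simp [Psi]
      rcases le_or_gt x (1/2) with hx | hx
      · have hx0 : Psi x = 0 := by simp only [Psi, if_pos hx]
        simp only [slope, hx0, hPsi0, vsub_eq_sub, sub_zero, smul_eq_mul, mul_zero,
          norm_zero]
        positivity
      · have hne : x - 1/2 ≠ 0 := by intro h; apply hx.ne'; linarith
        have hbound : Psi x ≤ Real.exp 1 * (2*x - 1)^2 := by
          simp only [Psi, if_neg (not_le.mpr hx)]
          set s : ℝ := 1/(2*x-1)^2 with hs
          have hxt : (0:ℝ) < 2*x - 1 := by linarith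
          have hspos : 0 < s := by positivity
          have h1 : Real.exp (1 - s) = Real.exp 1 * (Real.exp s)⁻¹ := by
            rw [← Real.exp_neg, ← Real.exp_add]; ring_nf
          have h2 : s ≤ Real.exp s := by
            have := Real.add_one_le_exp s; linarith
          have h3 : (Real.exp s)⁻¹ ≤ s⁻¹ :=
            inv_anti₀ hspos h2
          have h4 : s⁻¹ = (2*x-1)^2 := by rw [hs]; field_simp
          rw [h1]
          calc Real.exp 1 * (Real.exp s)⁻¹ ≤ Real.exp 1 * s⁻¹ := by
                exact mul_le_mul_of_nonneg_left h3 (Real.exp_pos 1).le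
            _ = Real.exp 1 * (2*x-1)^2 := by rw [h4]
        have hPsinn : 0 ≤ Psi x := by
          simp only [Psi, if_neg (not_le.mpr hx)]; positivity
        simp only [slope, hPsi0, vsub_eq_sub, sub_zero, smul_eq_mul]
        rw [Real.norm_eq_abs, abs_mul, abs_inv, abs_of_nonneg hPsinn,
          inv_mul_le_iff₀ (abs_pos.mpr hne)]
        have habs : |x - 1/2| * (4 * Real.exp 1 * |x - 1/2|) = Real.exp 1 * (2*x-1)^2 := by
          rw [mul_comm, mul_assoc, abs_mul_abs_self]; ring
        rw [habs]
        exact hbound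
    · have : Filter.Tendsto (fun x : ℝ => 4 * Real.exp 1 * |x - 1/2|) (nhds (1/2)) (nhds 0) := by
        have h0 : Filter.Tendsto (fun x : ℝ => x - 1/2) (nhds (1/2)) (nhds 0) := by
          have := tendsto_id (x := nhds (1/2:ℝ))
          simpa using this.sub_const (1/2)
        have := (h0.abs).const_mul (4 * Real.exp 1)
        simpa using this
      exact this.mono_left nhdsWithin_le_nhds
  exact h.deriv

/-- The derivative of Ψ satisfies 0 ≤ Ψ'(z) ≤ √(54/e) for every z ∈ ℝ. -/
theorem psi_deriv_bound (z : ℝ) :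
    0 ≤ deriv Psi z ∧ deriv Psi z ≤ Real.sqrt (54 / Real.exp 1) := by
  have hsqrtnn : (0:ℝ) ≤ Real.sqrt (54 / Real.exp 1) := Real.sqrt_nonneg _
  rcases lt_trichotomy z (1/2) with hz | hz | hz
  · have heq : Psi =ᶠ[nhds z] (fun _ => (0:ℝ)) := by
      filter_upwards [Iio_mem_nhds hz] with x hx
      have hx' : x ≤ 1/2 := le_of_lt hx
      simp only [Psi, if_pos hx']
    rw [heq.deriv_eq, deriv_const]
    exact ⟨le_refl 0, hsqrtnn⟩
  · rw [hz, psi_deriv_half]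
    exact ⟨le_refl 0, hsqrtnn⟩
  · have h := (psi_hasDerivAt_right z hz).deriv
    rw [h]
    have ht : (0:ℝ) < 2*z - 1 := by linarith
    constructor
    · positivity
    · exact psi_key_ineq _ ht
end

section
/- The function f̂_T is a zero-chain: for every x ∈ ℝ^T and every index k with 0 ≤ k < T, if x_j = 0 for all coordinates j > k, then the partial derivative ∂_j f̂_T(x) = 0 for all coordinates j > k + 1. Equivalently, prog(∇ f̂_T(x)) ≤ prog(x) + 1 for every x ∈ ℝ^T. -/
/-- Φ(z) = √e ∫_{−∞}^{z} exp(−t²/2) dt. -/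
noncomputable def Phi (z : ℝ) : ℝ :=
  Real.sqrt (Real.exp 1) * ∫ t in Set.Iic z, Real.exp (-t^2/2)

/-- The 1-based `i`-th coordinate of `x` (junk value 0 out of range): `coord x i = x_{i+1}`
in 0-based terms. -/
noncomputable def coord {T : ℕ} (x : EuclideanSpace ℝ (Fin T)) (i : ℕ) : ℝ :=
  if h : i < T then x ⟨i, h⟩ else 0

/-- f̂_T(x) = −Ψ(1)Φ(x₁) + Σ_{i=1}^{T−1} [Ψ(−x_i)Φ(−x_{i+1}) − Ψ(x_i)Φ(x_{i+1})],
where the 1-based coordinate x_i is `coord x (i-1)`. -/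
noncomputable def fhat (T : ℕ) (x : EuclideanSpace ℝ (Fin T)) : ℝ :=
  -(Psi 1) * Phi (coord x 0) +
    ∑ i ∈ Finset.Ico 1 T,
      (Psi (-(coord x (i-1))) * Phi (-(coord x i)) - Psi (coord x (i-1)) * Phi (coord x i))

open scoped Classical in
/-- prog(x) = max{i ≥ 1 : x_i ≠ 0} (1-based), and 0 if x = 0. -/
noncomputable def prog {T : ℕ} (x : EuclideanSpace ℝ (Fin T)) : ℕ :=
  (Finset.univ.filter fun i : Fin T => x i ≠ 0).sup fun i => (i : ℕ) + 1

lemma Psi_zero_of_le {z : ℝ} (h : z ≤ 1/2) : Psi z = 0 := if_pos h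

lemma dist_coord_le {T : ℕ} (y x : EuclideanSpace ℝ (Fin T)) (m : Fin T) :
    |y m - x m| ≤ dist y x := by
  rw [EuclideanSpace.dist_eq, ← Real.sqrt_sq_eq_abs]
  apply Real.sqrt_le_sqrt
  have := Finset.single_le_sum (f := fun i : Fin T => dist (y i) (x i) ^ 2)
    (fun i _ => sq_nonneg _) (Finset.mem_univ m)
  simpa [Real.dist_eq] using this

/-- truncated function -/
noncomputable def gtr (T k : ℕ) (x : EuclideanSpace ℝ (Fin T)) : ℝ :=
  -(Psi 1) * Phi (coord x 0) +
    ∑ i ∈ Finset.Ico 1 (k+1),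
      (Psi (-(coord x (i-1))) * Phi (-(coord x i)) - Psi (coord x (i-1)) * Phi (coord x i))

lemma key {T : ℕ} (k : ℕ) (hk : k < T) (x : EuclideanSpace ℝ (Fin T))
    (hx : ∀ j : Fin T, k ≤ (j : ℕ) → x j = 0)
    (j : Fin T) (hj : k + 1 ≤ (j : ℕ)) : gradient (fhat T) x j = 0 := by
  by_cases hd : DifferentiableAt ℝ (fhat T) x
  · -- local equality fhat =ᶠ gtr T k near x
    have hEq : fhat T =ᶠ[nhds x] gtr T k := by
      filter_upwards [Metric.ball_mem_nhds x (by norm_num : (0:ℝ) < 1/2)] with y hy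
      have hy' : dist y x < 1/2 := Metric.mem_ball.mp hy
      unfold fhat gtr
      rw [← Finset.sum_Ico_consecutive _ (Nat.one_le_iff_ne_zero.mpr (Nat.succ_ne_zero k)) hk]
      have hzero : ∀ i ∈ Finset.Ico (k+1) T,
          (Psi (-(coord y (i-1))) * Phi (-(coord y i)) -
            Psi (coord y (i-1)) * Phi (coord y i)) = 0 := by
        intro i hi
        obtain ⟨hi1, hi2⟩ := Finset.mem_Ico.mp hi
        have him : i - 1 < T := by omega
        have hxm : x ⟨i-1, him⟩ = 0 := hx _ (by simp; omega)
        have hcy : |coord y (i-1)| < 1/2 := by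
          have := dist_coord_le y x ⟨i-1, him⟩
          rw [hxm] at this
          unfold coord
          rw [dif_pos him]
          simpa using lt_of_le_of_lt this hy'
        have h1 : Psi (coord y (i-1)) = 0 := Psi_zero_of_le (by cases abs_lt.mp hcy; linarith)
        have h2 : Psi (-(coord y (i-1))) = 0 := Psi_zero_of_le (by cases abs_lt.mp hcy; linarith)
        rw [h1, h2]; ring
      rw [Finset.sum_eq_zero hzero]
      ring
    have hdg : DifferentiableAt ℝ (gtr T k) x := hd.congr_of_eventuallyEq hEq.symm
    have hfd : fderiv ℝ (fhat T) x = fderiv ℝ (gtr T k) x := hEq.fderiv_eq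
    -- gradient component as fderiv applied to single
    have hgrad : gradient (fhat T) x j =
        fderiv ℝ (fhat T) x (EuclideanSpace.single j (1:ℝ)) := by
      have h1 : @inner ℝ _ _
          ((InnerProductSpace.toDual ℝ (EuclideanSpace ℝ (Fin T))).symm (fderiv ℝ (fhat T) x))
          (EuclideanSpace.single j (1:ℝ)) =
          fderiv ℝ (fhat T) x (EuclideanSpace.single j (1:ℝ)) :=
        InnerProductSpace.toDual_symm_apply
      rw [EuclideanSpace.inner_single_right] at h1
      rw [gradient, ← h1]
      simp
    rw [hgrad, hfd]
    -- the line function is constant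
    set v : EuclideanSpace ℝ (Fin T) := EuclideanSpace.single j (1:ℝ) with hv
    have hcoord : ∀ (t : ℝ) (m : ℕ), m ≤ k → coord (x + t • v) m = coord x m := by
      intro t m hm
      unfold coord
      by_cases h : m < T
      · rw [dif_pos h, dif_pos h]
        have : (⟨m, h⟩ : Fin T) ≠ j := by
          intro he
          have : m = (j : ℕ) := by rw [← he]
          omega
        simp [hv, PiLp.add_apply, PiLp.smul_apply, EuclideanSpace.single_apply, this]
      · rw [dif_neg h, dif_neg h]
    have hconst : ∀ t : ℝ, gtr T k (x + t • v) = gtr T k x := by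
      intro t
      unfold gtr
      congr 1
      · rw [hcoord t 0 (Nat.zero_le _)]
      · apply Finset.sum_congr rfl
        intro i hi
        obtain ⟨hi1, hi2⟩ := Finset.mem_Ico.mp hi
        rw [hcoord t (i-1) (by omega), hcoord t i (by omega)]
    have hline : HasDerivAt (fun t : ℝ => x + t • v) v 0 := by
      have h1 : HasDerivAt (fun t : ℝ => t • v) ((1:ℝ) • v) 0 :=
        (hasDerivAt_id (0:ℝ)).smul_const v
      simpa using h1.const_add x
    have hcomp : HasDerivAt (fun t : ℝ => gtr T k (x + t • v))
        (fderiv ℝ (gtr T k) x v) 0 := by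
      have := (hdg.hasFDerivAt).comp_hasDerivAt_of_eq 0 hline (by simp)
      exact this
    have hzero : HasDerivAt (fun t : ℝ => gtr T k (x + t • v)) 0 0 := by
      have : (fun t : ℝ => gtr T k (x + t • v)) = fun _ => gtr T k x :=
        funext hconst
      rw [this]
      exact hasDerivAt_const 0 _
    exact hcomp.unique hzero
  · rw [gradient, fderiv_zero_of_not_differentiableAt hd]
    simp

/-- f̂_T is a zero-chain: if all (1-based) coordinates of x beyond k vanish, then all
partial derivatives beyond k+1 vanish; equivalently prog(∇f̂_T(x)) ≤ prog(x) + 1. -/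
theorem fhat_zero_chain (T : ℕ) (hT : 1 ≤ T) (x : EuclideanSpace ℝ (Fin T)) :
    (∀ k : ℕ, k < T → (∀ j : Fin T, k < (j : ℕ) + 1 → x j = 0) →
      ∀ j : Fin T, k + 1 < (j : ℕ) + 1 → gradient (fhat T) x j = 0) ∧
    prog (gradient (fhat T) x) ≤ prog x + 1 := by
  classical
  constructor
  · intro k hk hxk j hj
    exact key k hk x (fun i hi => hxk i (by omega)) j (by omega)
  · by_cases hp : prog x < T
    · apply Finset.sup_le
      intro j hj
      rw [Finset.mem_filter] at hj
      by_contra hc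
      push_neg at hc
      have hj' : prog x + 1 ≤ (j : ℕ) := by omega
      have hxz : ∀ i : Fin T, prog x ≤ (i : ℕ) → x i = 0 := by
        intro i hi
        by_contra hne
        have : (i : ℕ) + 1 ≤ prog x :=
          Finset.le_sup (f := fun i : Fin T => (i : ℕ) + 1)
            (Finset.mem_filter.mpr ⟨Finset.mem_univ i, hne⟩)
        omega
      exact hj.2 (key (prog x) hp x hxz j hj')
    · push_neg at hp
      apply Finset.sup_le
      intro j _
      have : (j : ℕ) < T := j.isLt
      omega
end

section
/- For every integer T ≥ 1 and every x ∈ ℝ^T, f̂_T(0) − f̂_T(x) ≤ 12 T; in particular f̂_T(0) − inf_{x ∈ ℝ^T} f̂_T(x) ≤ 12 T. -/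
/-- The 1-based `i`-th coordinate of `x` (junk value 0 out of range): `coord x i = x_{i+1}`
in 0-based terms. -/
lemma Psi_nonneg (z : ℝ) : 0 ≤ Psi z := by
  unfold Psi; split <;> positivity

lemma Psi_le (z : ℝ) : Psi z ≤ Real.exp 1 := by
  unfold Psi; split
  · positivity
  · apply Real.exp_le_exp.2
    nlinarith [sq_nonneg (2*z-1), sq_nonneg ((2*z-1)^2), div_nonneg (zero_le_one) (sq_nonneg (2*z-1))]

lemma Psi_zero : Psi 0 = 0 := by unfold Psi; norm_num

lemma Psi_one : Psi 1 = 1 := by unfold Psi; norm_num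

lemma integrable_g : MeasureTheory.Integrable (fun t : ℝ => Real.exp (-t^2/2)) := by
  have := integrable_exp_neg_mul_sq (b := (1/2 : ℝ)) (by norm_num)
  convert this using 2 with t
  ring_nf

lemma integral_g : (∫ t : ℝ, Real.exp (-t^2/2)) = Real.sqrt (2 * Real.pi) := by
  have := integral_gaussian (1/2 : ℝ)
  rw [show Real.pi / (1/2) = 2 * Real.pi by ring] at this
  rw [← this]
  congr 1 with t
  ring_nf

lemma Phi_nonneg (z : ℝ) : 0 ≤ Phi z := by
  unfold Phi
  apply mul_nonneg (Real.sqrt_nonneg _)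
  apply MeasureTheory.setIntegral_nonneg measurableSet_Iic
  intro t _; positivity

lemma Phi_le (z : ℝ) : Phi z ≤ Real.sqrt (Real.exp 1) * Real.sqrt (2 * Real.pi) := by
  unfold Phi
  apply mul_le_mul_of_nonneg_left _ (Real.sqrt_nonneg _)
  rw [← integral_g]
  apply MeasureTheory.setIntegral_le_integral integrable_g
  filter_upwards with t
  positivity

lemma C_le : Real.sqrt (Real.exp 1) * Real.sqrt (2 * Real.pi) ≤ 12 / Real.exp 1 := by
  have he : Real.exp 1 < 2.7182818286 := Real.exp_one_lt_d9
  have he0 : (0:ℝ) < Real.exp 1 := Real.exp_pos 1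
  have h1 : Real.sqrt (Real.exp 1) ≤ 1.6489 := by
    rw [show (1.6489:ℝ) = Real.sqrt (1.6489^2) by rw [Real.sqrt_sq]; norm_num]
    apply Real.sqrt_le_sqrt; nlinarith
  have h2 : Real.sqrt (2 * Real.pi) ≤ 2.5067 := by
    rw [show (2.5067:ℝ) = Real.sqrt (2.5067^2) by rw [Real.sqrt_sq]; norm_num]
    apply Real.sqrt_le_sqrt; nlinarith [Real.pi_lt_d6]
  have hs1 : (0:ℝ) ≤ Real.sqrt (Real.exp 1) := Real.sqrt_nonneg _
  have hs2 : (0:ℝ) ≤ Real.sqrt (2 * Real.pi) := Real.sqrt_nonneg _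
  have h12 : Real.sqrt (Real.exp 1) * Real.sqrt (2 * Real.pi) ≤ 1.6489 * 2.5067 :=
    mul_le_mul h1 h2 hs2 (by norm_num)
  rw [le_div_iff₀ he0]
  nlinarith [mul_nonneg hs1 hs2]

/-- f̂_T(0) − f̂_T(x) ≤ 12·T for every x; in particular f̂_T(0) − inf f̂_T ≤ 12·T. -/
theorem fhat_bounded_gap (T : ℕ) (hT : 1 ≤ T) :
    (∀ x : EuclideanSpace ℝ (Fin T), fhat T 0 - fhat T x ≤ 12 * T) ∧
    fhat T 0 - (⨅ x : EuclideanSpace ℝ (Fin T), fhat T x) ≤ 12 * T := by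
  set C := Real.sqrt (Real.exp 1) * Real.sqrt (2 * Real.pi) with hC
  have hCnn : 0 ≤ C := mul_nonneg (Real.sqrt_nonneg _) (Real.sqrt_nonneg _)
  have hE : (0:ℝ) < Real.exp 1 := Real.exp_pos 1
  have hEC : Real.exp 1 * C ≤ 12 := by
    have := C_le
    calc Real.exp 1 * C ≤ Real.exp 1 * (12 / Real.exp 1) :=
          mul_le_mul_of_nonneg_left this hE.le
      _ = 12 := by field_simp
  have hC12 : C ≤ 12 := by nlinarith [Real.one_le_exp_iff.mpr zero_le_one]
  have key : ∀ x : EuclideanSpace ℝ (Fin T), fhat T 0 - fhat T x ≤ 12 * T := by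
    intro x
    have h0 : fhat T 0 ≤ 0 := by
      unfold fhat
      have hc : ∀ i : ℕ, coord (0 : EuclideanSpace ℝ (Fin T)) i = 0 := by
        intro i; unfold coord; split <;> simp
      simp only [hc, neg_zero, Psi_zero, zero_mul, mul_zero, sub_zero,
        Finset.sum_const_zero, add_zero]
      have := Phi_nonneg (0:ℝ)
      nlinarith [Psi_one]
    have hlb : -(C + (T - 1 : ℕ) * (Real.exp 1 * C)) ≤ fhat T x := by
      unfold fhat
      have h1 : -(Psi 1) * Phi (coord x 0) ≥ -C := by
        rw [Psi_one]
        have := Phi_le (coord x 0)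
        have := Phi_nonneg (coord x 0)
        nlinarith
      have h2 : ∀ i ∈ Finset.Ico 1 T,
          -(Real.exp 1 * C) ≤
          Psi (-(coord x (i-1))) * Phi (-(coord x i)) - Psi (coord x (i-1)) * Phi (coord x i) := by
        intro i _
        have hA : 0 ≤ Psi (-(coord x (i-1))) * Phi (-(coord x i)) :=
          mul_nonneg (Psi_nonneg _) (Phi_nonneg _)
        have hB : Psi (coord x (i-1)) * Phi (coord x i) ≤ Real.exp 1 * C :=
          mul_le_mul (Psi_le _) (Phi_le _) (Phi_nonneg _) hE.le
        linarith
      have hsum : -((T - 1 : ℕ) * (Real.exp 1 * C)) ≤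
          ∑ i ∈ Finset.Ico 1 T,
            (Psi (-(coord x (i-1))) * Phi (-(coord x i)) - Psi (coord x (i-1)) * Phi (coord x i)) := by
        calc -((T - 1 : ℕ) * (Real.exp 1 * C))
            = ∑ _i ∈ Finset.Ico 1 T, -(Real.exp 1 * C) := by
              rw [Finset.sum_const, Nat.card_Ico]
              push_cast
              ring
          _ ≤ _ := Finset.sum_le_sum h2
      linarith
    have hTc : ((T - 1 : ℕ) : ℝ) = (T : ℝ) - 1 := by
      have := Nat.cast_sub (R := ℝ) hT
      simpa using this
    have hT1 : (1:ℝ) ≤ (T:ℝ) := by exact_mod_cast hT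
    calc fhat T 0 - fhat T x ≤ 0 + (C + (T - 1 : ℕ) * (Real.exp 1 * C)) := by linarith
      _ ≤ 12 * T := by
        rw [hTc]
        nlinarith
  refine ⟨key, ?_⟩
  have hnb : fhat T 0 - 12 * T ≤ ⨅ x : EuclideanSpace ℝ (Fin T), fhat T x := by
    apply le_ciInf
    intro x
    linarith [key x]
  linarith
end

section
/- Let (Ω, F, P) be a probability space with filtration (F_t)_{t ≥ 0}, and let (q_t)_{t ≥ 0} be random variables taking values in {0, 1} such that q_t is F_{t+1}-measurable and P(q_t = 1 | F_t) ≤ ρ almost surely for every t, where ρ ∈ (0, 1]. Define i_t = Σ_{s=0}^{t−1} q_s. Then for every δ ∈ (0, 1) and every integer T ≥ 1, with probability at least 1 − δ it holds that i_t < T for all t ≤ (T + log δ)/(ρ (e − 1)). -/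
open MeasureTheory

/-- High-probability bound: if q_t is F_{t+1}-measurable, {0,1}-valued, and
P(q_t = 1 | F_t) ≤ ρ a.s. with ρ ∈ (0,1], then for every δ ∈ (0,1) and T ≥ 1, with
probability at least 1 − δ, i_t = Σ_{s<t} q_s < T for all t ≤ (T + log δ)/(ρ(e − 1)). -/
theorem chain_progress_high_prob {Ω : Type*} {m0 : MeasurableSpace Ω}
    (μ : Measure Ω) [IsProbabilityMeasure μ] (ℱ : Filtration ℕ m0)
    (q : ℕ → Ω → ℝ) (hq01 : ∀ t ω, q t ω = 0 ∨ q t ω = 1)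
    (hadapted : ∀ t, Measurable[ℱ (t + 1)] (q t))
    (ρ : ℝ) (hρ0 : 0 < ρ) (hρ1 : ρ ≤ 1)
    (hcond : ∀ t, ∀ᵐ ω ∂μ,
      (μ[({ω | q t ω = 1}).indicator (fun _ => (1 : ℝ))|ℱ t]) ω ≤ ρ)
    (δ : ℝ) (hδ0 : 0 < δ) (hδ1 : δ < 1) (T : ℕ) (hT : 1 ≤ T) :
    ENNReal.ofReal (1 - δ) ≤
      μ {ω | ∀ t : ℕ, (t : ℝ) ≤ ((T : ℝ) + Real.log δ) / (ρ * (Real.exp 1 - 1)) →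
        ∑ s ∈ Finset.range t, q s ω < T} := by
  have he1 : (2.7 : ℝ) < Real.exp 1 := by
    have := Real.exp_one_gt_d9; linarith
  set c : ℝ := ρ * (Real.exp 1 - 1) with hc
  have hc0 : 0 < c := mul_pos hρ0 (by linarith)
  set τ : ℝ := ((T : ℝ) + Real.log δ) / c with hτdef
  by_cases hτ : 0 ≤ τ
  swap
  · -- vacuous case: no natural number t satisfies t ≤ τ < 0
    have hset : {ω | ∀ t : ℕ, (t : ℝ) ≤ τ →
        ∑ s ∈ Finset.range t, q s ω < T} = Set.univ := by
      ext ω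
      simp only [Set.mem_setOf_eq, Set.mem_univ, iff_true]
      intro t ht
      exact absurd ht (by push_neg; exact lt_of_lt_of_le (lt_of_not_ge hτ) (Nat.cast_nonneg t))
    rw [hset, measure_univ]
    exact ENNReal.ofReal_le_one.mpr (by linarith)
  -- main case
  set S : ℕ → Ω → ℝ := fun n ω => ∑ s ∈ Finset.range n, q s ω with hSdef
  set N : ℕ := ⌊τ⌋₊ with hN
  have hq_nonneg : ∀ s ω, 0 ≤ q s ω := by
    intro s ω; rcases hq01 s ω with h | h <;> rw [h] <;> norm_num
  have hq_le : ∀ s ω, q s ω ≤ 1 := by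
    intro s ω; rcases hq01 s ω with h | h <;> rw [h] <;> norm_num
  have hSm : ∀ n, Measurable[ℱ n] (S n) := by
    intro n
    apply Finset.measurable_sum
    intro s hs
    exact (hadapted s).mono (ℱ.mono (Finset.mem_range.mp hs)) le_rfl
  have hSm0 : ∀ n, Measurable (S n) := fun n => (hSm n).mono (ℱ.le n) le_rfl
  have hS_nonneg : ∀ n ω, 0 ≤ S n ω := fun n ω =>
    Finset.sum_nonneg fun s _ => hq_nonneg s ω
  have hS_le : ∀ n ω, S n ω ≤ n := by
    intro n ω
    calc S n ω ≤ ∑ _s ∈ Finset.range n, (1 : ℝ) :=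
          Finset.sum_le_sum fun s _ => hq_le s ω
      _ = n := by simp
  have hS_mono : ∀ {a b : ℕ}, a ≤ b → ∀ ω, S a ω ≤ S b ω := by
    intro a b hab ω
    exact Finset.sum_le_sum_of_subset_of_nonneg (Finset.range_subset_range.mpr hab)
      (fun s _ _ => hq_nonneg s ω)
  -- integrability of exp(S n)
  have hexpm : ∀ n, Measurable fun ω => Real.exp (S n ω) :=
    fun n => Real.measurable_exp.comp (hSm0 n)
  have hexp_int : ∀ n, Integrable (fun ω => Real.exp (S n ω)) μ := by
    intro n
    refine (integrable_const (Real.exp n)).mono' (hexpm n).aestronglyMeasurable ?_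
    refine Filter.Eventually.of_forall fun ω => ?_
    rw [Real.norm_eq_abs, abs_of_pos (Real.exp_pos _)]
    exact Real.exp_le_exp.mpr (hS_le n ω)
  -- indicator facts
  have hAmeas : ∀ t, MeasurableSet {ω | q t ω = 1} := by
    intro t
    exact ((hadapted t).mono (ℱ.le _) le_rfl) (measurableSet_singleton 1)
  have hind_meas : ∀ t, Measurable (({ω | q t ω = 1}).indicator (fun _ => (1 : ℝ))) :=
    fun t => measurable_const.indicator (hAmeas t)
  have hind_bd : ∀ t ω, ({ω | q t ω = 1}).indicator (fun _ => (1 : ℝ)) ω ∈ Set.Icc (0:ℝ) 1 := by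
    intro t ω
    by_cases h : ω ∈ {ω | q t ω = 1} <;> simp [Set.indicator_apply, h]
  -- product integrability
  have hprod_int : ∀ n t, Integrable
      (fun ω => Real.exp (S n ω) * ({ω | q t ω = 1}).indicator (fun _ => (1 : ℝ)) ω) μ := by
    intro n t
    refine (integrable_const (Real.exp n)).mono'
      ((hexpm n).mul (hind_meas t)).aestronglyMeasurable ?_
    refine Filter.Eventually.of_forall fun ω => ?_
    rw [Real.norm_eq_abs, abs_mul, abs_of_pos (Real.exp_pos _)]
    have h1 := hind_bd t ω
    have : |({ω | q t ω = 1}).indicator (fun _ => (1 : ℝ)) ω| ≤ 1 := by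
      rw [abs_of_nonneg h1.1]; exact h1.2
    calc Real.exp (S n ω) * |({ω | q t ω = 1}).indicator (fun _ => (1 : ℝ)) ω|
        ≤ Real.exp (S n ω) * 1 := by
          exact mul_le_mul_of_nonneg_left this (Real.exp_pos _).le
      _ ≤ Real.exp n := by rw [mul_one]; exact Real.exp_le_exp.mpr (hS_le n ω)
  -- the key conditional-expectation bound
  have hkey : ∀ n, ∫ ω, Real.exp (S n ω) * ({ω | q n ω = 1}).indicator (fun _ => (1:ℝ)) ω ∂μ
      ≤ ρ * ∫ ω, Real.exp (S n ω) ∂μ := by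
    intro n
    have hfm : StronglyMeasurable[ℱ n] (fun ω => Real.exp (S n ω)) :=
      (Real.measurable_exp.comp (hSm n)).stronglyMeasurable
    have hg_int : Integrable (({ω | q n ω = 1}).indicator (fun _ => (1:ℝ))) μ := by
      refine (integrable_const (1:ℝ)).mono' (hind_meas n).aestronglyMeasurable ?_
      refine Filter.Eventually.of_forall fun ω => ?_
      have h1 := hind_bd n ω
      rw [Real.norm_eq_abs, abs_of_nonneg h1.1]; exact h1.2
    have hmul := condExp_mul_of_stronglyMeasurable_left (m := ℱ n) (μ := μ) hfm (hprod_int n n) hg_int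
    have h1 : ∫ ω, Real.exp (S n ω) * ({ω | q n ω = 1}).indicator (fun _ => (1:ℝ)) ω ∂μ
        = ∫ ω, Real.exp (S n ω) * (μ[({ω | q n ω = 1}).indicator (fun _ => (1:ℝ))|ℱ n]) ω ∂μ := by
      have hic := integral_condExp (ℱ.le n) (μ := μ)
        (f := fun ω => Real.exp (S n ω) * ({ω | q n ω = 1}).indicator (fun _ => (1:ℝ)) ω)
      rw [← hic]
      exact integral_congr_ae hmul
    rw [h1]
    have h2 : ∫ ω, Real.exp (S n ω) * (μ[({ω | q n ω = 1}).indicator (fun _ => (1:ℝ))|ℱ n]) ω ∂μ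
        ≤ ∫ ω, Real.exp (S n ω) * ρ ∂μ := by
      refine integral_mono_ae ?_ ((hexp_int n).mul_const ρ) ?_
      · exact Integrable.bdd_mul integrable_condExp (hexpm n).aestronglyMeasurable
          (c := Real.exp n) (Filter.Eventually.of_forall fun ω => by
            rw [Real.norm_eq_abs, abs_of_pos (Real.exp_pos _)]
            exact Real.exp_le_exp.mpr (hS_le n ω))
      · filter_upwards [hcond n] with ω hω
        exact mul_le_mul_of_nonneg_left hω (Real.exp_pos _).le
    calc _ ≤ ∫ ω, Real.exp (S n ω) * ρ ∂μ := h2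
      _ = ρ * ∫ ω, Real.exp (S n ω) ∂μ := by rw [integral_mul_const, mul_comm]
  -- pointwise expansion of exp(S (n+1))
  have hstep : ∀ n ω, Real.exp (S (n+1) ω) = Real.exp (S n ω)
      + (Real.exp 1 - 1) * (Real.exp (S n ω) * ({ω | q n ω = 1}).indicator (fun _ => (1:ℝ)) ω) := by
    intro n ω
    have hsum : S (n+1) ω = S n ω + q n ω := Finset.sum_range_succ _ n
    rcases hq01 n ω with h | h
    · have hmem : ω ∉ {ω | q n ω = 1} := by simp [Set.mem_setOf_eq, h]
      rw [hsum, h, add_zero, Set.indicator_of_notMem hmem]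
      ring
    · have hmem : ω ∈ {ω | q n ω = 1} := by simp [Set.mem_setOf_eq, h]
      rw [hsum, h, Set.indicator_of_mem hmem, Real.exp_add]
      ring
  -- induction: ∫ exp(S n) ≤ (1+c)^n
  have hI : ∀ n, ∫ ω, Real.exp (S n ω) ∂μ ≤ (1 + c)^n := by
    intro n
    induction n with
    | zero =>
      simp only [pow_zero]
      have : (fun ω => Real.exp (S 0 ω)) = fun _ => (1:ℝ) := by
        funext ω; simp [hSdef]
      rw [this, integral_const, probReal_univ]; simp
    | succ n ih =>
      have hIn_nonneg : 0 ≤ ∫ ω, Real.exp (S n ω) ∂μ :=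
        integral_nonneg fun ω => (Real.exp_pos _).le
      have heq : ∫ ω, Real.exp (S (n+1) ω) ∂μ
          = (∫ ω, Real.exp (S n ω) ∂μ)
            + (Real.exp 1 - 1) * ∫ ω, Real.exp (S n ω) * ({ω | q n ω = 1}).indicator (fun _ => (1:ℝ)) ω ∂μ := by
        have : (fun ω => Real.exp (S (n+1) ω)) = fun ω => Real.exp (S n ω)
            + (Real.exp 1 - 1) * (Real.exp (S n ω) * ({ω | q n ω = 1}).indicator (fun _ => (1:ℝ)) ω) := by
          funext ω; exact hstep n ω
        rw [this, integral_add (hexp_int n) ((hprod_int n n).const_mul _), integral_const_mul]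
      rw [heq]
      have h3 : (Real.exp 1 - 1) * ∫ ω, Real.exp (S n ω) * ({ω | q n ω = 1}).indicator (fun _ => (1:ℝ)) ω ∂μ
          ≤ (Real.exp 1 - 1) * (ρ * ∫ ω, Real.exp (S n ω) ∂μ) :=
        mul_le_mul_of_nonneg_left (hkey n) (by linarith)
      calc (∫ ω, Real.exp (S n ω) ∂μ)
            + (Real.exp 1 - 1) * ∫ ω, Real.exp (S n ω) * ({ω | q n ω = 1}).indicator (fun _ => (1:ℝ)) ω ∂μ
          ≤ (∫ ω, Real.exp (S n ω) ∂μ) + (Real.exp 1 - 1) * (ρ * ∫ ω, Real.exp (S n ω) ∂μ) := by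
            linarith
        _ = (1 + c) * ∫ ω, Real.exp (S n ω) ∂μ := by rw [hc]; ring
        _ ≤ (1 + c) * (1 + c)^n := mul_le_mul_of_nonneg_left ih (by linarith)
        _ = (1 + c)^(n+1) := by ring
  -- bound the expectation of exp(S N)
  have hmean : ∫ ω, Real.exp (S N ω) ∂μ ≤ δ * Real.exp T := by
    have h1 : (1 + c : ℝ)^N ≤ Real.exp (c * N) := by
      have hb : (1 + c : ℝ) ≤ Real.exp c := by
        have := Real.add_one_le_exp c; linarith
      calc (1 + c : ℝ)^N ≤ (Real.exp c)^N :=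
            pow_le_pow_left₀ (by linarith) hb N
        _ = Real.exp (c * N) := by rw [← Real.exp_nat_mul]; ring_nf
    have h2 : c * N ≤ c * τ :=
      mul_le_mul_of_nonneg_left (Nat.floor_le hτ) hc0.le
    have h3 : c * τ = (T : ℝ) + Real.log δ := by
      rw [hτdef]; field_simp
    have h4 : Real.exp ((T : ℝ) + Real.log δ) = δ * Real.exp T := by
      rw [Real.exp_add, Real.exp_log hδ0]; ring
    calc ∫ ω, Real.exp (S N ω) ∂μ ≤ (1 + c)^N := hI N
      _ ≤ Real.exp (c * N) := h1
      _ ≤ Real.exp (c * τ) := Real.exp_le_exp.mpr h2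
      _ = δ * Real.exp T := by rw [h3, h4]
  -- Markov
  set bad : Set Ω := {ω | (T : ℝ) ≤ S N ω} with hbad
  have hbad_meas : MeasurableSet bad := measurableSet_le measurable_const (hSm0 N)
  have hmarkov : (μ bad).toReal ≤ δ := by
    have hm := mul_meas_ge_le_integral_of_nonneg
      (Filter.Eventually.of_forall fun ω => (Real.exp_pos (S N ω)).le)
      (hexp_int N) (Real.exp T)
    have hset : {ω | Real.exp T ≤ Real.exp (S N ω)} = bad := by
      ext ω; simp [hbad, Real.exp_le_exp]
    rw [hset, measureReal_def] at hm
    have hTpos : 0 < Real.exp (T:ℝ) := Real.exp_pos _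
    nlinarith [hmean]
  have hbad_le : μ bad ≤ ENNReal.ofReal δ := by
    rw [← ENNReal.ofReal_toReal (measure_ne_top μ bad)]
    exact ENNReal.ofReal_le_ofReal hmarkov
  -- good event contains badᶜ
  have hsub : badᶜ ⊆ {ω | ∀ t : ℕ, (t : ℝ) ≤ τ → ∑ s ∈ Finset.range t, q s ω < T} := by
    intro ω hω t ht
    have htN : t ≤ N := Nat.le_floor ht
    have h1 : S t ω ≤ S N ω := hS_mono htN ω
    have h2 : S N ω < T := lt_of_not_ge hω
    exact lt_of_le_of_lt h1 h2
  calc ENNReal.ofReal (1 - δ) = 1 - ENNReal.ofReal δ := by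
        rw [← ENNReal.ofReal_one, ← ENNReal.ofReal_sub _ hδ0.le]
    _ ≤ 1 - μ bad := tsub_le_tsub_left hbad_le 1
    _ = μ badᶜ := (prob_compl_eq_one_sub hbad_meas).symm
    _ ≤ _ := measure_mono hsub
end
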